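/- For a time-varying delay T : ℝ≥0 → ℝ with 0 ≤ T(t) ≤ h, and any continuous q̇ : ℝ → ℝⁿ, the functional V₃(t) = ∫_{−h}^0 ∫_{t+θ}^t q̇(s)ᵀ R q̇(s) ds dθ (R ⪰ 0) satisfies V̇₃(t) ≤ h q̇(t)ᵀ R q̇(t) − (1/h) L(t)ᵀ R L(t), where L(t) = ∫_{t−T(t)}^t q̇(s) ds. -/

import Mathlib

open Matrix MeasureTheory intervalIntegral

lemma stmt9_symm_dot {n : ℕ} (R : Matrix (Fin n) (Fin n) ℝ) (hRsym : R.IsSymm)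
    (x v : Fin n → ℝ) : x ⬝ᵥ R.mulVec v = v ⬝ᵥ R.mulVec x := by
  rw [Matrix.dotProduct_mulVec, ← Matrix.mulVec_transpose, hRsym.eq, dotProduct_comm]

lemma stmt9_int_dot {n : ℕ} (qd : ℝ → Fin n → ℝ) (hqd : Continuous qd)
    (w : Fin n → ℝ) (a b : ℝ) :
    (∫ s in a..b, qd s ⬝ᵥ w) = (∫ s in a..b, qd s) ⬝ᵥ w := by
  let lm : (Fin n → ℝ) →ₗ[ℝ] ℝ :=
    { toFun := (· ⬝ᵥ w), map_add' := fun x y => add_dotProduct x y w,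
      map_smul' := fun c x => smul_dotProduct c x w }
  let clm : (Fin n → ℝ) →L[ℝ] ℝ := LinearMap.toContinuousLinearMap lm
  exact clm.intervalIntegral_comp_comm (hqd.intervalIntegrable a b)

/-- For V₃(t) = ∫_{−h}^0 ∫_{t+θ}^t q̇ᵀRq̇ ds dθ with 0 ≤ T(t) ≤ h and R ⪰ 0, every
derivative of V₃ at t is bounded by h q̇ᵀRq̇ − (1/h)LᵀRL, L(t) = ∫_{t−T(t)}^t q̇ ds. -/
theorem stmt9 {n : ℕ} (h : ℝ) (hh : 0 < h)
    (R : Matrix (Fin n) (Fin n) ℝ) (hRsym : R.IsSymm) (hRpsd : R.PosSemidef)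
    (qd : ℝ → (Fin n → ℝ)) (hqd : Continuous qd)
    (T : ℝ → ℝ) (hT : ∀ t ≥ (0 : ℝ), 0 ≤ T t ∧ T t ≤ h) :
    ∀ t ≥ (0 : ℝ), ∀ D : ℝ,
      HasDerivAt (fun u => ∫ θ in (-h)..(0 : ℝ),
        (∫ s in (u + θ)..u, (qd s) ⬝ᵥ R.mulVec (qd s))) D t →
      D ≤ h * ((qd t) ⬝ᵥ R.mulVec (qd t))
          - (1 / h) * ((∫ s in (t - T t)..t, qd s) ⬝ᵥ
              R.mulVec (∫ s in (t - T t)..t, qd s)) := by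
  intro t ht D hD
  set f : ℝ → ℝ := fun s => qd s ⬝ᵥ R.mulVec (qd s) with hf_def
  have hfc : Continuous f := by
    simp only [hf_def, dotProduct, Matrix.mulVec, dotProduct]
    exact continuous_finset_sum _ fun i _ => ((continuous_apply i).comp hqd).mul
      (continuous_finset_sum _ fun j _ => continuous_const.mul ((continuous_apply j).comp hqd))
  have hfnn : ∀ s, 0 ≤ f s := fun s => by
    have := hRpsd.dotProduct_mulVec_nonneg (qd s); simpa using this
  have hfi : ∀ a b : ℝ, IntervalIntegrable f volume a b :=
    fun a b => hfc.intervalIntegrable a b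
  set F : ℝ → ℝ := fun u => ∫ s in (0:ℝ)..u, f s with hF_def
  have hFd : ∀ u, HasDerivAt F (f u) u :=
    fun u => (hfc.integral_hasStrictDerivAt 0 u).hasDerivAt
  have hFc : Continuous F := by
    rw [continuous_iff_continuousAt]; exact fun u => (hFd u).continuousAt
  -- Rewrite the double integral
  have key : ∀ u : ℝ, (∫ θ in (-h)..(0:ℝ), ∫ s in (u + θ)..u, f s)
      = h * F u - ((∫ s in (0:ℝ)..u, F s) - ∫ s in (0:ℝ)..(u - h), F s) := by
    intro u
    have h1 : ∀ θ : ℝ, (∫ s in (u + θ)..u, f s) = F u - F (u + θ) := fun θ =>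
      (integral_interval_sub_left (hfi 0 u) (hfi 0 (u + θ))).symm
    have hFi : IntervalIntegrable (fun θ => F (u + θ)) volume (-h) 0 :=
      (hFc.comp (continuous_const.add continuous_id)).intervalIntegrable _ _
    calc (∫ θ in (-h)..(0:ℝ), ∫ s in (u + θ)..u, f s)
        = ∫ θ in (-h)..(0:ℝ), (F u - F (u + θ)) := by simp_rw [h1]
      _ = (∫ _θ in (-h)..(0:ℝ), F u) - ∫ θ in (-h)..(0:ℝ), F (u + θ) :=
          integral_sub intervalIntegrable_const hFi
      _ = h * F u - ∫ s in (u - h)..u, F s := by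
          rw [intervalIntegral.integral_const, intervalIntegral.integral_comp_add_left F u]
          norm_num [smul_eq_mul, sub_eq_add_neg, add_comm]
      _ = h * F u - ((∫ s in (0:ℝ)..u, F s) - ∫ s in (0:ℝ)..(u - h), F s) := by
          rw [integral_interval_sub_left (hFc.intervalIntegrable 0 u)
            (hFc.intervalIntegrable 0 (u - h))]
  -- Derivative of the rewritten function
  have hGd : ∀ u, HasDerivAt (fun v => ∫ s in (0:ℝ)..v, F s) (F u) u :=
    fun u => (hFc.integral_hasStrictDerivAt 0 u).hasDerivAt
  have hg : HasDerivAt (fun u => h * F u -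
      ((∫ s in (0:ℝ)..u, F s) - ∫ s in (0:ℝ)..(u - h), F s))
      (h * f t - (F t - F (t - h))) t := by
    have h2 : HasDerivAt (fun u : ℝ => ∫ s in (0:ℝ)..(u - h), F s) (F (t - h)) t := by
      have := (hGd (t - h)).comp t ((hasDerivAt_id t).sub_const h)
      simpa [Function.comp_def] using this
    exact ((hFd t).const_mul h).sub ((hGd t).sub h2)
  have hDeq : D = h * f t - (F t - F (t - h)) := by
    have : HasDerivAt (fun u => h * F u -
        ((∫ s in (0:ℝ)..u, F s) - ∫ s in (0:ℝ)..(u - h), F s)) D t := by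
      have heq : (fun u => ∫ θ in (-h)..(0:ℝ), ∫ s in (u + θ)..u, f s)
          = fun u => h * F u -
            ((∫ s in (0:ℝ)..u, F s) - ∫ s in (0:ℝ)..(u - h), F s) := funext key
      rw [← heq]; exact hD
    exact this.unique hg
  have hFTsub : F t - F (t - h) = ∫ s in (t - h)..t, f s :=
    integral_interval_sub_left (hfi 0 t) (hfi 0 (t - h))
  rw [hDeq, hFTsub]
  -- Now the Jensen inequality part
  obtain ⟨hT0, hTh⟩ := hT t ht
  set L : Fin n → ℝ := ∫ s in (t - T t)..t, qd s with hL_def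
  set Q : ℝ := L ⬝ᵥ R.mulVec L with hQ_def
  have hQnn : 0 ≤ Q := by have := hRpsd.dotProduct_mulVec_nonneg L; simpa [hQ_def] using this
  have hsplit : (∫ s in (t - h)..(t - T t), f s) + ∫ s in (t - T t)..t, f s
      = ∫ s in (t - h)..t, f s :=
    integral_add_adjacent_intervals (hfi _ _) (hfi _ _)
  have hpart1 : 0 ≤ ∫ s in (t - h)..(t - T t), f s :=
    intervalIntegral.integral_nonneg (by linarith) (fun s _ => hfnn s)
  have hkey2 : (1 / h) * Q ≤ ∫ s in (t - T t)..t, f s := by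
    rcases hT0.eq_or_lt with hz | hz
    · have ha : t - T t = t := by rw [← hz]; ring
      have hL0 : L = 0 := by rw [hL_def, ha, intervalIntegral.integral_same]
      have : Q = 0 := by simp [hQ_def, hL0]
      rw [this, mul_zero]
      exact intervalIntegral.integral_nonneg (by linarith) (fun s _ => hfnn s)
    · set τ : ℝ := T t with hτ_def
      set v : Fin n → ℝ := τ⁻¹ • L with hv_def
      set w : Fin n → ℝ := R.mulVec v with hw_def
      have hdotc : Continuous fun s => qd s ⬝ᵥ w := by
        simp only [dotProduct]
        exact continuous_finset_sum _ fun i _ =>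
          ((continuous_apply i).comp hqd).mul continuous_const
      -- pointwise expansion
      have hexp : ∀ s, (qd s - v) ⬝ᵥ R.mulVec (qd s - v)
          = f s - 2 * (qd s ⬝ᵥ w) + v ⬝ᵥ w := by
        intro s
        have hsymm : v ⬝ᵥ R.mulVec (qd s) = qd s ⬝ᵥ R.mulVec v :=
          stmt9_symm_dot R hRsym v (qd s)
        simp only [sub_dotProduct, Matrix.mulVec_sub, dotProduct_sub,
          hw_def, hf_def, hsymm]
        ring
      have hint : (0:ℝ) ≤ ∫ s in (t - T t)..t, (qd s - v) ⬝ᵥ R.mulVec (qd s - v) := by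
        refine intervalIntegral.integral_nonneg (by linarith) (fun s _ => ?_)
        have := hRpsd.dotProduct_mulVec_nonneg (qd s - v); simpa using this
      have hcalc : (∫ s in (t - T t)..t, (qd s - v) ⬝ᵥ R.mulVec (qd s - v))
          = (∫ s in (t - T t)..t, f s) - 2 * (L ⬝ᵥ w) + τ * (v ⬝ᵥ w) := by
        have e1 : (∫ s in (t - T t)..t, (qd s - v) ⬝ᵥ R.mulVec (qd s - v))
            = ∫ s in (t - T t)..t, (f s - 2 * (qd s ⬝ᵥ w) + v ⬝ᵥ w) := by
          simp_rw [hexp]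
        rw [e1]
        rw [integral_add (((show Continuous (fun s => f s - 2 * (qd s ⬝ᵥ w)) from hfc.sub (continuous_const.mul hdotc)).intervalIntegrable _ _))
          intervalIntegrable_const,
          integral_sub (hfi _ _) ((show Continuous (fun s => 2 * (qd s ⬝ᵥ w)) from continuous_const.mul hdotc).intervalIntegrable _ _),
          intervalIntegral.integral_const_mul, stmt9_int_dot qd hqd w,
          intervalIntegral.integral_const, ← hL_def]
        have : t - (t - T t) = τ := by rw [hτ_def]; ring
        rw [this, smul_eq_mul]
      -- compute the dot products
      have hLw : L ⬝ᵥ w = τ⁻¹ * Q := by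
        rw [hw_def, hv_def, Matrix.mulVec_smul, dotProduct_smul, hQ_def, smul_eq_mul]
      have hvw : v ⬝ᵥ w = τ⁻¹ * (τ⁻¹ * Q) := by
        rw [hw_def, hv_def, Matrix.mulVec_smul, smul_dotProduct,
          dotProduct_smul, hQ_def, smul_eq_mul, smul_eq_mul]
      have hτQ : τ⁻¹ * Q ≤ ∫ s in (t - T t)..t, f s := by
        rw [hcalc, hLw, hvw] at hint
        have hτne : τ ≠ 0 := ne_of_gt hz
        have : τ * (τ⁻¹ * (τ⁻¹ * Q)) = τ⁻¹ * Q := by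
          field_simp
        rw [this] at hint
        linarith
      have hmono : (1 / h) * Q ≤ τ⁻¹ * Q := by
        apply mul_le_mul_of_nonneg_right _ hQnn
        rw [one_div]
        exact inv_anti₀ hz hTh
      linarith
  linarith
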